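/- Consider the cloud model with gateway drift bound G ≥ 0, mixing weight α ≥ 0 and maximal delay K_c ≥ 1 in a real inner product space H: iterates w : ℕ → H, a delay function τ : ℕ → ℕ with τ(h) ≤ h − 1 and h − τ(h) ≤ K_c for all h ≥ 1, received models v : ℕ → H with ‖v(h) − w(τ(h))‖² ≤ G² for all h ≥ 1, and update rule w(h) = (1−α)·w(h−1) + α·v(h); set Q(h) = ‖w(τ(h)) − w(h−1)‖² for h ≥ 1 and Q(h) = 0 for h ≤ 0. If 2√2·α·(K_c−1)^{3/2} ≤ 1, then for every positive integer H: ∑_{h=1}^{H} Q(h) ≤ 4·H·α²·(K_c−1)²·G² and ∑_{h=1}^{H} √(Q(h)) ≤ 3·H·α·(K_c−1)·G. -/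

import Mathlib

private lemma asyncHFL_telescope {X : Type*} [AddCommGroup X] (f : ℕ → X) (m n : ℕ)
    (h : m ≤ n) : ∑ j ∈ Finset.Ico m n, (f (j + 1) - f j) = f n - f m := by
  induction n, h using Nat.le_induction with
  | base => simp
  | succ n hmn ih =>
    rw [Finset.sum_Ico_succ_top (by omega), ih]
    abel

/-- Deterministic counterpart of Lemma 10 (Sum of cloud recursion) of the
Async-HFL convergence analysis: for asynchronous cloud aggregation with gateway
drift bound `G`, mixing weight `α ≥ 0` and maximal delay `K_c`, under the
step-size condition `2√2·α·(K_c−1)^{3/2} ≤ 1`, the cloud staleness residuals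
`Q(h)` and their square roots have sums bounded by `4Hα²(K_c−1)²G²` and
`3Hα(K_c−1)G` respectively. -/
theorem asyncHFL_sum_of_cloud_recursion
    {X : Type*} [NormedAddCommGroup X] [InnerProductSpace ℝ X]
    (G α : ℝ) (Kc : ℕ) (hG : 0 ≤ G) (hα : 0 ≤ α) (hKc : 1 ≤ Kc)
    (hcond : 2 * Real.sqrt 2 * α * ((Kc : ℝ) - 1) ^ ((3 : ℝ) / 2) ≤ 1)
    (w v : ℕ → X) (τ : ℕ → ℕ) (Q : ℤ → ℝ)
    (hτ : ∀ h : ℕ, 1 ≤ h → τ h ≤ h - 1)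
    (hτK : ∀ h : ℕ, 1 ≤ h → h - τ h ≤ Kc)
    (hv : ∀ h : ℕ, 1 ≤ h → ‖v h - w (τ h)‖ ^ 2 ≤ G ^ 2)
    (hw : ∀ h : ℕ, 1 ≤ h → w h = (1 - α) • w (h - 1) + α • v h)
    (hQ : ∀ h : ℕ, 1 ≤ h → Q h = ‖w (τ h) - w (h - 1)‖ ^ 2)
    (hQ0 : ∀ h : ℤ, h ≤ 0 → Q h = 0)
    (H : ℕ) (hH : 1 ≤ H) :
    (∑ h ∈ Finset.Icc 1 H, Q (h : ℤ) ≤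
        4 * (H : ℝ) * α ^ 2 * ((Kc : ℝ) - 1) ^ 2 * G ^ 2) ∧
      (∑ h ∈ Finset.Icc 1 H, Real.sqrt (Q (h : ℤ)) ≤
        3 * (H : ℝ) * α * ((Kc : ℝ) - 1) * G) := by
  have hKcR : (0 : ℝ) ≤ (Kc : ℝ) - 1 := by
    have : (1 : ℝ) ≤ (Kc : ℝ) := by exact_mod_cast hKc
    linarith
  set k : ℝ := (Kc : ℝ) - 1 with hk_def
  clear_value k
  -- step-size condition gives α k ≤ 1/2
  have hc : α * k ≤ 1 / 2 := by
    rcases eq_or_lt_of_le hKc with h1 | h2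
    · have : k = 0 := by simp [hk_def, ← h1]
      rw [this]; simp
    · have h2' : (1 : ℝ) ≤ k := by
        have : (2 : ℕ) ≤ Kc := h2
        have : (2 : ℝ) ≤ (Kc : ℝ) := by exact_mod_cast this
        simp only [hk_def]; linarith
      have hx : k ≤ k ^ ((3 : ℝ) / 2) := by
        calc k = k ^ ((1 : ℝ)) := (Real.rpow_one _).symm
          _ ≤ k ^ ((3 : ℝ) / 2) :=
            Real.rpow_le_rpow_of_exponent_le h2' (by norm_num)
      have hs2 : (1 : ℝ) ≤ Real.sqrt 2 := by
        rw [show (1 : ℝ) = Real.sqrt 1 by simp]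
        exact Real.sqrt_le_sqrt (by norm_num)
      have h3 : 2 * Real.sqrt 2 * (α * k) ≤ 1 := by
        have := mul_le_mul_of_nonneg_left hx
          (by positivity : (0 : ℝ) ≤ 2 * Real.sqrt 2 * α)
        nlinarith [hcond]
      nlinarith [mul_nonneg hα (le_trans zero_le_one h2')]
  have hc0 : 0 ≤ α * k := mul_nonneg hα hKcR
  set B : ℝ := 2 * α * k * G with hB_def
  clear_value B
  have hB0 : 0 ≤ B := by rw [hB_def]; positivity
  -- key pointwise bound by strong induction
  have key : ∀ h : ℕ, Real.sqrt (Q h) ≤ B := by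
    intro h
    induction h using Nat.strong_induction_on with
    | _ h ih =>
      rcases Nat.eq_zero_or_pos h with h0 | h1
      · subst h0
        rw [show ((0 : ℕ) : ℤ) = 0 by norm_num, hQ0 0 le_rfl, Real.sqrt_zero]
        exact hB0
      · have hsq : Real.sqrt (Q h) = ‖w (τ h) - w (h - 1)‖ := by
          rw [hQ h h1, Real.sqrt_sq (norm_nonneg _)]
        have htel : w (h - 1) - w (τ h) =
            ∑ j ∈ Finset.Ico (τ h) (h - 1), (w (j + 1) - w j) :=
          (asyncHFL_telescope w (τ h) (h - 1) (hτ h h1)).symm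
        have hbound : ∀ j ∈ Finset.Ico (τ h) (h - 1),
            ‖w (j + 1) - w j‖ ≤ α * (G + B) := by
          intro j hj
          simp only [Finset.mem_Ico] at hj
          have hj1 : 1 ≤ j + 1 := Nat.le_add_left 1 j
          have hwj : w (j + 1) - w j =
              α • (v (j + 1) - w (τ (j + 1))) + α • (w (τ (j + 1)) - w j) := by
            have hwe := hw (j + 1) hj1
            simp only [Nat.add_sub_cancel] at hwe
            rw [hwe, smul_sub, smul_sub, sub_smul, one_smul]
            abel
          have hvG : ‖v (j + 1) - w (τ (j + 1))‖ ≤ G := by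
            have h2 := hv (j + 1) hj1
            nlinarith [norm_nonneg (v (j + 1) - w (τ (j + 1)))]
          have hQj : ‖w (τ (j + 1)) - w j‖ ≤ B := by
            have hq := hQ (j + 1) hj1
            simp only [Nat.add_sub_cancel] at hq
            have := ih (j + 1) (by omega)
            rwa [hq, Real.sqrt_sq (norm_nonneg _)] at this
          calc ‖w (j + 1) - w j‖
              ≤ ‖α • (v (j + 1) - w (τ (j + 1)))‖ + ‖α • (w (τ (j + 1)) - w j)‖ := by
                rw [hwj]; exact norm_add_le _ _
            _ = α * ‖v (j + 1) - w (τ (j + 1))‖ + α * ‖w (τ (j + 1)) - w j‖ := by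
                rw [norm_smul, norm_smul, Real.norm_of_nonneg hα]
            _ ≤ α * G + α * B := by
                gcongr
            _ = α * (G + B) := by ring
        have hcard : ((h - 1 - τ h : ℕ) : ℝ) ≤ k := by
          have h4 := hτK h h1
          have h5 := hτ h h1
          have : h - 1 - τ h ≤ Kc - 1 := by omega
          have : ((h - 1 - τ h : ℕ) : ℝ) ≤ ((Kc - 1 : ℕ) : ℝ) := by exact_mod_cast this
          rw [Nat.cast_sub hKc, Nat.cast_one] at this
          rw [hk_def]; exact this
        have hnorm : ‖w (τ h) - w (h - 1)‖ ≤ k * (α * (G + B)) := by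
          rw [norm_sub_rev, htel]
          calc ‖∑ j ∈ Finset.Ico (τ h) (h - 1), (w (j + 1) - w j)‖
              ≤ ∑ j ∈ Finset.Ico (τ h) (h - 1), ‖w (j + 1) - w j‖ :=
                norm_sum_le _ _
            _ ≤ ∑ _j ∈ Finset.Ico (τ h) (h - 1), α * (G + B) :=
                Finset.sum_le_sum hbound
            _ = ((h - 1 - τ h : ℕ) : ℝ) * (α * (G + B)) := by
                rw [Finset.sum_const, Nat.card_Ico, nsmul_eq_mul]
            _ ≤ k * (α * (G + B)) := by
                refine mul_le_mul_of_nonneg_right hcard ?_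
                have : 0 ≤ G + B := by linarith
                positivity
        rw [hsq]
        refine le_trans hnorm ?_
        have h6 : (0 : ℝ) ≤ α * k * G * (1 / 2 - α * k) :=
          mul_nonneg (mul_nonneg hc0 hG) (by linarith)
        have h7 : k * (α * (G + B)) = α * k * G + 2 * (α * k) * (α * k) * G := by
          rw [hB_def]; ring
        rw [h7, hB_def]
        nlinarith [h6]
  have hQnn : ∀ h : ℕ, 1 ≤ h → 0 ≤ Q h := by
    intro h hh; rw [hQ h hh]; positivity
  have hQle : ∀ h : ℕ, 1 ≤ h → Q h ≤ B ^ 2 := by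
    intro h hh
    calc Q h = Real.sqrt (Q h) ^ 2 := (Real.sq_sqrt (hQnn h hh)).symm
      _ ≤ B ^ 2 := pow_le_pow_left₀ (Real.sqrt_nonneg _) (key h) 2
  have hcardIcc : (Finset.Icc 1 H).card = H := by rw [Nat.card_Icc]; omega
  constructor
  · calc ∑ h ∈ Finset.Icc 1 H, Q (h : ℤ)
        ≤ ∑ _h ∈ Finset.Icc 1 H, B ^ 2 := by
          refine Finset.sum_le_sum fun h hh => hQle h ?_
          exact (Finset.mem_Icc.mp hh).1
      _ = (H : ℝ) * B ^ 2 := by rw [Finset.sum_const, hcardIcc, nsmul_eq_mul]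
      _ = 4 * (H : ℝ) * α ^ 2 * k ^ 2 * G ^ 2 := by rw [hB_def]; ring
  · calc ∑ h ∈ Finset.Icc 1 H, Real.sqrt (Q (h : ℤ))
        ≤ ∑ _h ∈ Finset.Icc 1 H, B := Finset.sum_le_sum fun h _ => key h
      _ = (H : ℝ) * B := by rw [Finset.sum_const, hcardIcc, nsmul_eq_mul]
      _ ≤ 3 * (H : ℝ) * α * k * G := by
          rw [hB_def]
          have : (0 : ℝ) ≤ (H : ℝ) * (α * k * G) := by positivity
          nlinarith
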